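/- Let F be a class of functions Ω → ℝ each bounded in absolute value by 1, and suppose the finite set {x₁,…,xₙ} ⊆ Ω is ε-shattered by F. Then for every choice of signs ε₁,…,εₙ ∈ {−1,1}, sup_{f∈F} |Σᵢ εᵢ f(xᵢ)| ≥ n·ε. -/
import Mathlib


/-- The points `x 0, …, x (n-1)` are `ε`-shattered by the class `F`. -/
def ShatteredBy {Ω : Type*} (F : Set (Ω → ℝ)) {n : ℕ} (x : Fin n → Ω) (ε : ℝ) : Prop :=
  ∃ h : Fin n → ℝ, ∀ S : Finset (Fin n), ∃ f ∈ F,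
    ∀ i, (i ∈ S → f (x i) ≤ h i - ε) ∧ (i ∉ S → h i + ε ≤ f (x i))

theorem shattered_sup_signs {Ω : Type*} (F : Set (Ω → ℝ))
    (hbdd : ∀ f ∈ F, ∀ ω, |f ω| ≤ 1) {n : ℕ} (x : Fin n → Ω) (ε : ℝ) (hε : 0 < ε)
    (hsh : ShatteredBy F x ε) (s : Fin n → ℝ) (hs : ∀ i, s i = 1 ∨ s i = -1) :
    (n : ℝ) * ε ≤ ⨆ f : F, |∑ i, s i * (f : Ω → ℝ) (x i)| := by
  obtain ⟨h, hh⟩ := hsh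
  set S : Finset (Fin n) := Finset.univ.filter (fun i => s i = 1) with hS
  obtain ⟨f, hfF, hfp⟩ := hh S
  obtain ⟨g, hgF, hgp⟩ := hh Sᶜ
  -- boundedness of range
  have habs : ∀ i, |s i| = 1 := by
    intro i; rcases hs i with h1 | h1 <;> simp [h1]
  have hbdd' : BddAbove (Set.range fun f : F => |∑ i, s i * (f : Ω → ℝ) (x i)|) := by
    refine ⟨n, ?_⟩
    rintro _ ⟨⟨f, hf⟩, rfl⟩
    calc |∑ i, s i * f (x i)| ≤ ∑ i, |s i * f (x i)| := Finset.abs_sum_le_sum_abs _ _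
      _ ≤ ∑ _i : Fin n, (1 : ℝ) := by
          refine Finset.sum_le_sum fun i _ => ?_
          rw [abs_mul, habs i, one_mul]
          exact hbdd f hf (x i)
      _ = n := by simp
  have key : ∀ i, 2 * ε ≤ s i * (g (x i) - f (x i)) := by
    intro i
    rcases hs i with h1 | h1
    · have hiS : i ∈ S := by simp [hS, h1]
      have h2 := (hfp i).1 hiS
      have h3 := (hgp i).2 (by simp [hiS])
      rw [h1]; linarith
    · have hiS : i ∉ S := by simp [hS, h1]; norm_num
      have h2 := (hfp i).2 hiS
      have h3 := (hgp i).1 (by simpa using hiS)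
      rw [h1]; linarith
  have hsum : 2 * n * ε ≤ ∑ i, s i * (g (x i) - f (x i)) := by
    calc (2 * n * ε : ℝ) = ∑ _i : Fin n, 2 * ε := by
          simp [Finset.sum_const]; ring
      _ ≤ _ := Finset.sum_le_sum fun i _ => key i
  have hsplit : ∑ i, s i * (g (x i) - f (x i))
      = (∑ i, s i * g (x i)) - ∑ i, s i * f (x i) := by
    rw [← Finset.sum_sub_distrib]; congr 1; ext i; ring
  have habs2 : (n : ℝ) * ε ≤ |∑ i, s i * g (x i)| ∨
      (n : ℝ) * ε ≤ |∑ i, s i * f (x i)| := by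
    by_contra hc
    push_neg at hc
    have h1 := abs_lt.mp hc.1
    have h2 := abs_lt.mp hc.2
    rw [hsplit] at hsum
    linarith
  rcases habs2 with hle | hle
  · exact hle.trans (le_ciSup hbdd' ⟨g, hgF⟩)
  · exact hle.trans (le_ciSup hbdd' ⟨f, hfF⟩)
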